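/- Let k be a field containing a primitive n-th root of unity, n ≥ 3, and N ≥ 2. Define I_{N,n} = C_{N,n} ∩ J_{N,n} in k[x_0,…,x_N] as for the Fermat arrangement. If F_{N−1,n} ∉ I_{N−1,n}^2, then F_{N,n} ∉ I_{N,n}^2. -/

import Mathlib

open MvPolynomial

noncomputable section

/-- `F_{M,n} = ∏_{0 ≤ i < j < M} (x_i^n − x_j^n)` in `k[x_0,…,x_{M-1}]`. -/
def fermatPoly (k : Type*) [Field k] (M n : ℕ) : MvPolynomial (Fin M) k :=
  ∏ p ∈ Finset.univ.filter (fun p : Fin M × Fin M => p.1 < p.2), (X p.1 ^ n - X p.2 ^ n)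

/-- `C_{M,n} = ⋂_{i<j} (x_i, x_j)`. -/
def cevaC (k : Type*) [Field k] (M : ℕ) : Ideal (MvPolynomial (Fin M) k) :=
  ⨅ (i : Fin M) (j : Fin M) (_ : i < j), Ideal.span {X i, X j}

/-- `J_{M,n} = ⋂_{i<j<l, 0≤a,b<n} (x_i − ε^a x_j, x_i − ε^b x_l)`. -/
def cevaJ (k : Type*) [Field k] (M n : ℕ) (ε : k) : Ideal (MvPolynomial (Fin M) k) :=
  ⨅ (i : Fin M) (j : Fin M) (l : Fin M) (_ : i < j) (_ : j < l) (a : Fin n) (b : Fin n),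
    Ideal.span {X i - C (ε ^ (a : ℕ)) * X j, X i - C (ε ^ (b : ℕ)) * X l}

/-- `I_{M,n} = J_{M,n} ∩ C_{M,n}`. -/
def cevaI (k : Type*) [Field k] (M n : ℕ) (ε : k) : Ideal (MvPolynomial (Fin M) k) :=
  cevaJ k M n ε ⊓ cevaC k M

/-- The evaluation homomorphism `k[x_0,…,x_N] → k[x_0,…,x_{N−1}]` sending `x_N ↦ 1` and
`x_i ↦ x_i` for `i < N`. -/
def evalLastOne (k : Type*) [Field k] (N : ℕ) :
    MvPolynomial (Fin (N + 1)) k →+* MvPolynomial (Fin N) k :=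
  (aeval (fun i : Fin (N + 1) => if h : (i : ℕ) < N then (X ⟨i, h⟩ : MvPolynomial (Fin N) k)
    else 1)).toRingHom

attribute [local instance] MvPolynomial.gradedAlgebra

section Aux
variable {k : Type*} [Field k] {N : ℕ}


lemma evalLastOne_X_castSucc (i : Fin N) :
    evalLastOne k N (X i.castSucc) = X i := by
  simp [evalLastOne, Fin.is_lt]

lemma evalLastOne_X_last :
    evalLastOne k N (X (Fin.last N)) = 1 := by
  simp [evalLastOne]

lemma evalLastOne_C (c : k) : evalLastOne k N (C c) = C c := by
  simp [evalLastOne]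

lemma pair_split (N : ℕ) :
    (Finset.univ.filter (fun p : Fin (N+1) × Fin (N+1) => p.1 < p.2)) =
    ((Finset.univ.filter (fun p : Fin N × Fin N => p.1 < p.2)).image
      (fun p => (p.1.castSucc, p.2.castSucc))) ∪
    (Finset.univ.image (fun i : Fin N => (i.castSucc, Fin.last N))) := by
  ext ⟨a, b⟩
  simp only [Finset.mem_filter, Finset.mem_univ, true_and, Finset.mem_union, Finset.mem_image,
    Prod.mk.injEq]
  constructor
  · intro hab
    rcases Fin.eq_castSucc_or_eq_last b with ⟨j, rfl⟩ | rfl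
    · left
      have hab' : (a : ℕ) < (j : ℕ) := hab
      have ha : (a : ℕ) < N := lt_trans hab' j.isLt
      exact ⟨(⟨a, ha⟩, j), hab', Fin.ext rfl, rfl⟩
    · right
      have ha : (a : ℕ) < N := hab
      exact ⟨⟨a, ha⟩, Fin.ext rfl, rfl⟩
  · rintro (⟨p, hp, rfl, rfl⟩ | ⟨i, hi, rfl⟩)
    · exact Fin.castSucc_lt_castSucc_iff.mpr hp
    · subst hi; exact Fin.castSucc_lt_last _

lemma evalLastOne_fermat (n : ℕ) :
    evalLastOne k N (fermatPoly k (N + 1) n) =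
      fermatPoly k N n * ∏ i : Fin N, (X i ^ n - 1) := by
  unfold fermatPoly
  rw [map_prod, pair_split, Finset.prod_union, Finset.prod_image, Finset.prod_image]
  · congr 1
    · apply Finset.prod_congr rfl
      intro p hp
      simp [map_sub, map_pow, evalLastOne_X_castSucc]
    · apply Finset.prod_congr rfl
      intro i hi
      simp [map_sub, map_pow, evalLastOne_X_castSucc, evalLastOne_X_last]
  · intro i _ j _ h
    simpa [Prod.ext_iff, Fin.castSucc_inj] using h
  · intro p _ q _ h
    obtain ⟨h1, h2⟩ := Prod.mk.injEq .. ▸ h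
    exact Prod.ext (Fin.castSucc_inj.mp h1) (Fin.castSucc_inj.mp h2)
  · rw [Finset.disjoint_left]
    rintro ⟨a, b⟩ hab hab'
    simp only [Finset.mem_image, Finset.mem_filter, Prod.mk.injEq] at hab hab'
    obtain ⟨p, _, _, h2⟩ := hab
    obtain ⟨i, _, h4⟩ := hab'
    rw [← h2] at h4
    exact absurd h4.2.symm (Fin.castSucc_lt_last p.2).ne

lemma evalLastOne_cevaI_le (n : ℕ) (ε : k) :
    Ideal.map (evalLastOne k N) (cevaI k (N + 1) n ε) ≤ cevaI k N n ε := by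
  rw [Ideal.map_le_iff_le_comap]
  intro f hf
  obtain ⟨hfJ, hfC⟩ := (hf : f ∈ cevaI k (N + 1) n ε)
  show evalLastOne k N f ∈ cevaI k N n ε
  refine ⟨?_, ?_⟩
  · simp only [cevaJ, SetLike.mem_coe, Submodule.mem_iInf] at hfJ ⊢
    intro i j l hij hjl a b
    have h1 := hfJ i.castSucc j.castSucc l.castSucc (Fin.castSucc_lt_castSucc_iff.mpr hij)
      (Fin.castSucc_lt_castSucc_iff.mpr hjl) a b
    have h2 := Ideal.mem_map_of_mem (evalLastOne k N) h1
    rw [Ideal.map_span, Set.image_insert_eq, Set.image_singleton] at h2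
    simpa [map_sub, map_mul, evalLastOne_X_castSucc, evalLastOne_C] using h2
  · simp only [cevaC, SetLike.mem_coe, Submodule.mem_iInf] at hfC ⊢
    intro i j hij
    have h1 := hfC i.castSucc j.castSucc (Fin.castSucc_lt_castSucc_iff.mpr hij)
    have h2 := Ideal.mem_map_of_mem (evalLastOne k N) h1
    rw [Ideal.map_span, Set.image_insert_eq, Set.image_singleton] at h2
    simpa [evalLastOne_X_castSucc] using h2

lemma cevaI_isHomogeneous (M n : ℕ) (ε : k) :
    (cevaI k M n ε).IsHomogeneous (homogeneousSubmodule (Fin M) k) := by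
  apply Ideal.IsHomogeneous.inf
  · refine Ideal.IsHomogeneous.iInf fun i => Ideal.IsHomogeneous.iInf fun j =>
      Ideal.IsHomogeneous.iInf fun l => Ideal.IsHomogeneous.iInf fun _ =>
      Ideal.IsHomogeneous.iInf fun _ => Ideal.IsHomogeneous.iInf fun a =>
      Ideal.IsHomogeneous.iInf fun b => Ideal.homogeneous_span _ _ ?_
    rintro x (rfl | rfl)
    · exact ⟨1, (mem_homogeneousSubmodule _ _).mpr
        ((isHomogeneous_X k i).sub (by simpa using (isHomogeneous_C (σ := Fin M) (ε ^ (a : ℕ))).mul (isHomogeneous_X k j)))⟩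
    · exact ⟨1, (mem_homogeneousSubmodule _ _).mpr
        ((isHomogeneous_X k i).sub (by simpa using (isHomogeneous_C (σ := Fin M) (ε ^ (b : ℕ))).mul (isHomogeneous_X k l)))⟩
  · refine Ideal.IsHomogeneous.iInf fun i => Ideal.IsHomogeneous.iInf fun j =>
      Ideal.IsHomogeneous.iInf fun _ => Ideal.homogeneous_span _ _ ?_
    rintro x (rfl | rfl)
    · exact ⟨1, (mem_homogeneousSubmodule _ _).mpr (isHomogeneous_X k i)⟩
    · exact ⟨1, (mem_homogeneousSubmodule _ _).mpr (isHomogeneous_X k j)⟩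

lemma homogeneousComponent_mem_of_mem {M : ℕ} {I : Ideal (MvPolynomial (Fin M) k)}
    (hI : I.IsHomogeneous (homogeneousSubmodule (Fin M) k)) {f : MvPolynomial (Fin M) k}
    (hf : f ∈ I) (d : ℕ) : homogeneousComponent d f ∈ I := by
  have := hI d hf
  have heq : (DirectSum.decompose (homogeneousSubmodule (Fin M) k) f d : MvPolynomial (Fin M) k) =
      homogeneousComponent d f := MvPolynomial.decomposition.decompose'_apply f d
  rwa [heq] at this

lemma fermat_isHomogeneous (M n : ℕ) :
    (fermatPoly k M n).IsHomogeneous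
      (∑ _p ∈ Finset.univ.filter (fun p : Fin M × Fin M => p.1 < p.2), n) :=
  IsHomogeneous.prod _ _ _
    (fun p _ => by
      simpa using ((isHomogeneous_X k p.1).pow n).sub ((isHomogeneous_X k p.2).pow n))


end Aux


/-- For `n ≥ 3`, `N ≥ 2` and `ε ∈ k` a primitive `n`-th root of unity,
if `F_{N−1,n} ∉ I_{N−1,n}^2` (in `k[x_0,…,x_{N−1}]`), then `F_{N,n} ∉ I_{N,n}^2`
(in `k[x_0,…,x_N]`). -/
theorem stmt13 {k : Type*} [Field k] {n N : ℕ} (hn : 3 ≤ n) (hN : 2 ≤ N) {ε : k}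
    (hε : IsPrimitiveRoot ε n)
    (hprev : fermatPoly k N n ∉ (cevaI k N n ε) ^ 2) :
    fermatPoly k (N + 1) n ∉ (cevaI k (N + 1) n ε) ^ 2 := by
  intro h
  apply hprev
  set G : MvPolynomial (Fin N) k := ∏ i : Fin N, (X i ^ n - 1) with hG
  have hm : fermatPoly k N n * G ∈ (cevaI k N n ε) ^ 2 := by
    have h1 : evalLastOne k N (fermatPoly k (N + 1) n) ∈
        Ideal.map (evalLastOne k N) ((cevaI k (N + 1) n ε) ^ 2) :=
      Ideal.mem_map_of_mem _ h
    rw [Ideal.map_pow] at h1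
    have h2 := Ideal.pow_right_mono (evalLastOne_cevaI_le n ε) 2 h1
    rwa [evalLastOne_fermat] at h2
  set d := ∑ _p ∈ Finset.univ.filter (fun p : Fin N × Fin N => p.1 < p.2), n with hd
  have hF : (fermatPoly k N n).IsHomogeneous d := fermat_isHomogeneous N n
  have hsq : ((cevaI k N n ε) ^ 2).IsHomogeneous (homogeneousSubmodule (Fin N) k) := by
    rw [sq]; exact (cevaI_isHomogeneous N n ε).mul (cevaI_isHomogeneous N n ε)
  have hcomp := _root_.homogeneousComponent_mem_of_mem hsq hm d
  have key : ∀ e : ℕ, homogeneousComponent d (fermatPoly k N n * homogeneousComponent e G) =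
      if d = d + e then fermatPoly k N n * homogeneousComponent e G else 0 := fun e =>
    homogeneousComponent_of_mem
      ((mem_homogeneousSubmodule _ _).mpr (hF.mul (homogeneousComponent_isHomogeneous e G)))
  have hcc : constantCoeff G = (-1 : k) ^ N := by
    rw [hG, map_prod]
    have : ∀ i : Fin N, constantCoeff ((X i : MvPolynomial (Fin N) k) ^ n - 1) = -1 := by
      intro i
      rw [map_sub, map_pow, constantCoeff_X, map_one, zero_pow (by omega), zero_sub]
    simp [this]
  have hcompeq : homogeneousComponent d (fermatPoly k N n * G) =
      fermatPoly k N n * C ((-1 : k) ^ N) := by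
    conv_lhs => rw [← sum_homogeneousComponent G, Finset.mul_sum, map_sum]
    rw [Finset.sum_eq_single 0]
    · rw [key 0, if_pos (by omega), homogeneousComponent_zero, ← constantCoeff_eq, hcc]
    · intro e _ hne
      rw [key e, if_neg (by omega)]
    · intro h0
      exact absurd (Finset.mem_range.mpr (Nat.succ_pos _)) h0
  rw [hcompeq] at hcomp
  have hfe : fermatPoly k N n = fermatPoly k N n * C ((-1 : k) ^ N) * C ((-1 : k) ^ N) := by
    rw [mul_assoc, ← C_mul, ← mul_pow, neg_mul_neg, mul_one, one_pow, C_1, mul_one]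
  rw [hfe]
  exact Ideal.mul_mem_right _ _ hcomp

end
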